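/- For any n ≥ 2 and any Λ > 0, there exists an embedded self-shrinker Σ ⊂ ℝ^{n+1} with entropy λ(Σ) > Λ and finite index, given that: (a) for 3 ≤ n+1 ≤ 7 there exist embedded self-shrinkers Σ_k in ℝ^{n+1} with entropy growing like k^{1/(n+1)} and index(Σ_k) ≤ k; (b) λ(Σ × ℝ) = λ(Σ); (c) Σ × ℝ is a self-shrinker iff Σ is; and (d) if Σ has finite index then Σ × ℝ has finite index. -/
import Mathlib


/-- Existence of embedded self-shrinkers with arbitrarily large entropy and finite index in
every dimension `n ≥ 2`, deduced from: (a) in dimensions `3 ≤ n+1 ≤ 7` there are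
self-shrinkers `Σ_k` with entropy growing like `k^{1/(n+1)}` and `index(Σ_k) ≤ k`;
(b) taking a product with `ℝ` preserves entropy; (c) products with `ℝ` are self-shrinkers
iff the factor is; (d) products with `ℝ` preserve finiteness of the index. -/
theorem large_entropy_finite_index_shrinker
    (shr : ∀ m : ℕ, Set (EuclideanSpace ℝ (Fin m)) → Prop)
    (ent : ∀ m : ℕ, Set (EuclideanSpace ℝ (Fin m)) → ℝ)
    (idx : ∀ m : ℕ, Set (EuclideanSpace ℝ (Fin m)) → ℕ∞)
    (Pm : ∀ m : ℕ, Set (EuclideanSpace ℝ (Fin m)) → Set (EuclideanSpace ℝ (Fin (m + 1))))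
    (hb : ∀ (m : ℕ) (S : Set (EuclideanSpace ℝ (Fin m))), ent (m + 1) (Pm m S) = ent m S)
    (hc : ∀ (m : ℕ) (S : Set (EuclideanSpace ℝ (Fin m))), shr (m + 1) (Pm m S) ↔ shr m S)
    (hd : ∀ (m : ℕ) (S : Set (EuclideanSpace ℝ (Fin m))),
      idx m S < ⊤ → idx (m + 1) (Pm m S) < ⊤)
    (ha : ∀ n : ℕ, 2 ≤ n → n ≤ 6 →
      ∃ S : ℕ → Set (EuclideanSpace ℝ (Fin (n + 1))),
        (∀ k : ℕ, shr (n + 1) (S k) ∧ idx (n + 1) (S k) ≤ (k : ℕ∞)) ∧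
          ∃ c : ℝ, 0 < c ∧ ∀ k : ℕ, 1 ≤ k →
            c * (k : ℝ) ^ ((1 : ℝ) / ((n : ℝ) + 1)) ≤ ent (n + 1) (S k)) :
    ∀ n : ℕ, 2 ≤ n → ∀ Λ : ℝ, 0 < Λ →
      ∃ S : Set (EuclideanSpace ℝ (Fin (n + 1))),
        shr (n + 1) S ∧ Λ < ent (n + 1) S ∧ idx (n + 1) S < ⊤ := by
  intro n hn
  induction n with
  | zero => omega
  | succ m ih =>
    by_cases h6 : m + 1 ≤ 6
    · intro Λ hΛ
      obtain ⟨S, hS, c, hc0, hck⟩ := ha (m + 1) hn h6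
      have htop : Filter.Tendsto
          (fun k : ℕ => c * (k : ℝ) ^ ((1 : ℝ) / ((m : ℝ) + 1 + 1)))
          Filter.atTop Filter.atTop := by
        apply Filter.Tendsto.const_mul_atTop hc0
        exact (tendsto_rpow_atTop (by positivity)).comp
          tendsto_natCast_atTop_atTop
      obtain ⟨k, hk1, hkΛ⟩ :=
        ((htop.eventually_gt_atTop Λ).and (Filter.eventually_ge_atTop 1)).exists
      refine ⟨S k, (hS k).1, ?_, lt_of_le_of_lt (hS k).2 (WithTop.coe_lt_top k)⟩
      have := hck k hkΛ
      push_cast at this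
      exact lt_of_lt_of_le hk1 this
    · intro Λ hΛ
      obtain ⟨S, h1, h2, h3⟩ := ih (by omega) Λ hΛ
      exact ⟨Pm (m + 1) S, (hc _ _).mpr h1, by rw [hb]; exact h2, hd _ _ h3⟩
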